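/- The function Ψ_κ(n) = Σ_{k=0}^n ((-κ)^k / k!) Σ_{s=0}^k C(k,s) C(n,s) (H_{n-s} + H_{k-s} - 2H_s), where H_m = Σ_{j=1}^m 1/j are the harmonic numbers (H_0 = 0), satisfies the recurrence -(n+1)(Ψ_κ(n+1) - Ψ_κ(n)) + n(Ψ_κ(n) - Ψ_κ(n-1)) = κ Ψ_κ(n) for all n ≥ 1, with Ψ_κ(0) = 0 and Ψ_κ(1) = 1. -/

import Mathlib

open Finset

/-- The `m`-th harmonic number `H_m = Σ_{j=1}^m 1/j`, with `H_0 = 0`. -/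
noncomputable def harm (m : ℕ) : ℝ := ∑ j ∈ range m, (1 : ℝ) / (j + 1)

/-- The second solution
`Ψ_κ(n) = Σ_{k=0}^n ((-κ)^k/k!) Σ_{s=0}^k C(k,s)C(n,s)(H_{n-s}+H_{k-s}-2H_s)`. -/
noncomputable def Psi (κ : ℂ) (n : ℕ) : ℂ :=
  ∑ k ∈ range (n + 1), (-κ) ^ k / (k.factorial : ℂ) *
    ∑ s ∈ range (k + 1), (k.choose s : ℂ) * (n.choose s : ℂ) *
      ((harm (n - s) : ℝ) + (harm (k - s) : ℝ) - 2 * (harm s : ℝ) : ℝ)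

set_option maxHeartbeats 2000000

namespace PsiAux

/-- summand -/
noncomputable def A (n k s : ℕ) : ℝ :=
  (k.choose s : ℝ) * (n.choose s : ℝ) * (harm (n - s) + harm (k - s) - 2 * harm s)

noncomputable def T (n k : ℕ) : ℝ := ∑ s ∈ range (k + 1), A n k s

noncomputable def g (n k s : ℕ) : ℝ :=
  -((k.choose s : ℝ) * (n.choose s : ℝ)) *
    ((s : ℝ) ^ 2 * (harm (n - s) + harm (k - s) - 2 * harm s) / ((n : ℝ) + 1 - s)
      + (s : ℝ) * (2 * (n : ℝ) + 2 - s) / ((n : ℝ) + 1 - s) ^ 2)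

lemma harm_zero : harm 0 = 0 := by simp [harm]

lemma harm_succ (m : ℕ) : harm (m + 1) = harm m + 1 / ((m : ℝ) + 1) := by
  simp [harm, Finset.sum_range_succ]

lemma harm_one : harm 1 = 1 := by
  have := harm_succ 0; simp [harm_zero] at this; simp [this]


/-- cast of C(n+1,s) -/
lemma cast_choose_succ_left (n s : ℕ) (hs : s ≤ n) :
    (((n + 1).choose s : ℕ) : ℝ) = (n.choose s : ℝ) * ((n : ℝ) + 1) / ((n : ℝ) + 1 - s) := by
  have h := Nat.choose_mul_succ_eq n s
  have hcast : (n.choose s : ℝ) * ((n : ℝ) + 1) = (((n + 1).choose s : ℕ) : ℝ) * ((n : ℝ) + 1 - s) := by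
    have := congrArg (fun x : ℕ => (x : ℝ)) h
    push_cast [Nat.cast_sub (show s ≤ n + 1 by omega)] at this
    linarith
  have hne : (n : ℝ) + 1 - s ≠ 0 := by
    have : (s : ℝ) ≤ n := by exact_mod_cast hs
    intro h0; linarith
  rw [eq_div_iff hne]; linarith

/-- cast of C(n-1,s) -/
lemma cast_choose_pred_left (n s : ℕ) (hn : 1 ≤ n) (hs : s ≤ n) :
    (((n - 1).choose s : ℕ) : ℝ) = (n.choose s : ℝ) * ((n : ℝ) - s) / (n : ℝ) := by
  have h := Nat.choose_mul_succ_eq (n - 1) s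
  rw [Nat.sub_add_cancel hn] at h
  have hcast : (((n - 1).choose s : ℕ) : ℝ) * (n : ℝ) = (n.choose s : ℝ) * ((n : ℝ) - s) := by
    have := congrArg (fun x : ℕ => (x : ℝ)) h
    push_cast [Nat.cast_sub hs] at this
    linarith
  have hne : (n : ℝ) ≠ 0 := by
    have : (0 : ℝ) < n := by exact_mod_cast hn
    linarith
  rw [eq_div_iff hne]; linarith

/-- cast of C(n,s+1) -/
lemma cast_choose_succ_right (n s : ℕ) (hs : s ≤ n) :
    ((n.choose (s + 1) : ℕ) : ℝ) = (n.choose s : ℝ) * ((n : ℝ) - s) / ((s : ℝ) + 1) := by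
  have h := Nat.choose_succ_right_eq n s
  have hcast : ((n.choose (s + 1) : ℕ) : ℝ) * ((s : ℝ) + 1) = (n.choose s : ℝ) * ((n : ℝ) - s) := by
    have := congrArg (fun x : ℕ => (x : ℝ)) h
    push_cast [Nat.cast_sub hs] at this
    linarith
  have hne : (s : ℝ) + 1 ≠ 0 := by positivity
  rw [eq_div_iff hne]; linarith


lemma core (N K S c d W : ℝ) (hN : N ≠ 0) (hK : K ≠ 0)
    (d1 : N - S ≠ 0) (d2 : K - S ≠ 0) (d3 : N + 1 - S ≠ 0) (d4 : S + 1 ≠ 0) :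
    (N + 1) * (d * (c * (N + 1) / (N + 1 - S)) * (W + 1 / (N + 1 - S)))
      - (2 * N + 1) * (d * c * W)
      + N * (d * (c * (N - S) / N) * (W - 1 / (N - S)))
      - K * (d * (K - S) / K * c * (W - 1 / (K - S)))
    = (-(d * (K - S) / (S + 1) * (c * (N - S) / (S + 1))) *
        ((S + 1) ^ 2 * (W - 1 / (N - S) - 1 / (K - S) - 2 / (S + 1)) / (N - S)
          + (S + 1) * (2 * N + 2 - (S + 1)) / (N - S) ^ 2))
      - (-(d * c) * (S ^ 2 * W / (N + 1 - S) + S * (2 * N + 2 - S) / (N + 1 - S) ^ 2)) := by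
  field_simp
  ring

lemma core2 (N K c W : ℝ) (hN : N ≠ 0)
    (d1 : N - K ≠ 0) (d3 : N + 1 - K ≠ 0) :
    (N + 1) * (c * (N + 1) / (N + 1 - K) * (W + 1 / (N + 1 - K)))
      - (2 * N + 1) * (c * W)
      + N * (c * (N - K) / N * (W - 1 / (N - K)))
      - 0
    = 0 - (-c * (K ^ 2 * W / (N + 1 - K) + K * (2 * N + 2 - K) / (N + 1 - K) ^ 2)) := by
  field_simp
  ring

lemma step_generic (n k s : ℕ) (hn : 1 ≤ n) (hk : k ≤ n) (hsk : s < k) :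
    ((n : ℝ) + 1) * A (n + 1) k s - (2 * (n : ℝ) + 1) * A n k s + (n : ℝ) * A (n - 1) k s
      - (k : ℝ) * A n (k - 1) s
    = g n k (s + 1) - g n k s := by
    have hsn : s < n := lt_of_lt_of_le hsk hk
    have hk1 : 1 ≤ k := Nat.one_le_iff_ne_zero.2 (by omega)
    have hNS : ((n - s : ℕ) : ℝ) = (n : ℝ) - s := Nat.cast_sub hsn.le
    have hKS : ((k - s : ℕ) : ℝ) = (k : ℝ) - s := Nat.cast_sub hsk.le
    have h1 : harm (n + 1 - s) = harm (n - s) + 1 / ((n : ℝ) - s + 1) := by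
      rw [show n + 1 - s = (n - s) + 1 by omega, harm_succ, hNS]
    have h2 : harm (n - 1 - s) = harm (n - s) - 1 / ((n : ℝ) - s) := by
      have e : n - s = (n - 1 - s) + 1 := by omega
      have := harm_succ (n - 1 - s)
      rw [← e] at this
      have hc : ((n - 1 - s : ℕ) : ℝ) + 1 = (n : ℝ) - s := by
        rw [show n - 1 - s = n - (1 + s) by omega, Nat.cast_sub (show 1 + s ≤ n by omega)]
        push_cast; ring
      rw [hc] at this; linarith
    have h3 : harm (k - 1 - s) = harm (k - s) - 1 / ((k : ℝ) - s) := by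
      have e : k - s = (k - 1 - s) + 1 := by omega
      have := harm_succ (k - 1 - s)
      rw [← e] at this
      have hc : ((k - 1 - s : ℕ) : ℝ) + 1 = (k : ℝ) - s := by
        rw [show k - 1 - s = k - (1 + s) by omega, Nat.cast_sub (show 1 + s ≤ k by omega)]
        push_cast; ring
      rw [hc] at this; linarith
    have h4 : harm (n - (s + 1)) = harm (n - s) - 1 / ((n : ℝ) - s) := by
      rw [show n - (s + 1) = n - 1 - s by omega]; exact h2
    have h5 : harm (k - (s + 1)) = harm (k - s) - 1 / ((k : ℝ) - s) := by
      rw [show k - (s + 1) = k - 1 - s by omega]; exact h3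
    have h6 : harm (s + 1) = harm s + 1 / ((s : ℝ) + 1) := harm_succ s
    have c1 := cast_choose_succ_left n s hsn.le
    have c2 := cast_choose_pred_left n s hn hsn.le
    have c3 := cast_choose_pred_left k s hk1 hsk.le
    have c4 := cast_choose_succ_right n s hsn.le
    have c5 := cast_choose_succ_right k s hsk.le
    have d1 : (n : ℝ) - s ≠ 0 := by
      have : (s : ℝ) < n := by exact_mod_cast hsn
      intro h0; linarith
    have d2 : (k : ℝ) - s ≠ 0 := by
      have : (s : ℝ) < k := by exact_mod_cast hsk
      intro h0; linarith
    have d3 : (n : ℝ) + 1 - s ≠ 0 := by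
      have : (s : ℝ) < n := by exact_mod_cast hsn
      intro h0; linarith
    have d4 : (s : ℝ) + 1 ≠ 0 := by positivity
    have d5 : (n : ℝ) ≠ 0 := by
      have : (0:ℝ) < n := by exact_mod_cast hn
      linarith
    have d6 : (k : ℝ) ≠ 0 := by
      have : (0:ℝ) < k := by exact_mod_cast hk1
      linarith
    set W := harm (n - s) + harm (k - s) - 2 * harm s with hW
    set c : ℝ := (n.choose s : ℝ) with hc
    set d : ℝ := (k.choose s : ℝ) with hd
    have eA1 : A (n + 1) k s
        = d * (c * ((n : ℝ) + 1) / ((n : ℝ) + 1 - s)) * (W + 1 / ((n : ℝ) + 1 - s)) := by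
      rw [A, h1, c1, hW]; ring
    have eA0 : A n k s = d * c * W := by
      rw [A, hW]
    have eA2 : A (n - 1) k s
        = d * (c * ((n : ℝ) - s) / (n : ℝ)) * (W - 1 / ((n : ℝ) - s)) := by
      rw [A, h2, c2, hW]; ring
    have eA3 : A n (k - 1) s
        = d * ((k : ℝ) - s) / (k : ℝ) * c * (W - 1 / ((k : ℝ) - s)) := by
      rw [A, h3, c3, hW]; ring
    have eg0 : g n k s
        = -(d * c) * ((s : ℝ) ^ 2 * W / ((n : ℝ) + 1 - s)
            + (s : ℝ) * (2 * (n : ℝ) + 2 - s) / ((n : ℝ) + 1 - s) ^ 2) := by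
      rw [g, hW]
    have eg1 : g n k (s + 1)
        = -(d * ((k : ℝ) - s) / ((s : ℝ) + 1) * (c * ((n : ℝ) - s) / ((s : ℝ) + 1))) *
            (((s : ℝ) + 1) ^ 2 * (W - 1 / ((n : ℝ) - s) - 1 / ((k : ℝ) - s) - 2 / ((s : ℝ) + 1))
                / ((n : ℝ) - s)
              + ((s : ℝ) + 1) * (2 * (n : ℝ) + 2 - ((s : ℝ) + 1)) / ((n : ℝ) - s) ^ 2) := by
      rw [g, h4, h5, h6, c4, c5, hW]
      push_cast
      ring
    rw [eA1, eA0, eA2, eA3, eg0, eg1]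
    exact core (n : ℝ) (k : ℝ) (s : ℝ) c d W d5 d6 d1 d2 d3 d4

lemma step_edge (n k : ℕ) (hn : 1 ≤ n) (hkn : k < n) :
    ((n : ℝ) + 1) * A (n + 1) k k - (2 * (n : ℝ) + 1) * A n k k + (n : ℝ) * A (n - 1) k k
      - (k : ℝ) * A n (k - 1) k
    = g n k (k + 1) - g n k k := by
  have hz1 : (k : ℝ) * A n (k - 1) k = 0 := by
    rcases Nat.eq_zero_or_pos k with rfl | hk0
    · simp
    · have : (k - 1).choose k = 0 := Nat.choose_eq_zero_of_lt (by omega)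
      simp [A, this]
  have hz2 : g n k (k + 1) = 0 := by
    have : k.choose (k + 1) = 0 := Nat.choose_succ_self k
    simp [g, this]
  rw [hz1, hz2]
  have hKK : harm (k - k) = 0 := by rw [Nat.sub_self]; exact harm_zero
  have hNS : ((n - k : ℕ) : ℝ) = (n : ℝ) - k := Nat.cast_sub hkn.le
  have h1 : harm (n + 1 - k) = harm (n - k) + 1 / ((n : ℝ) - k + 1) := by
    rw [show n + 1 - k = (n - k) + 1 by omega, harm_succ, hNS]
  have h2 : harm (n - 1 - k) = harm (n - k) - 1 / ((n : ℝ) - k) := by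
    have e : n - k = (n - 1 - k) + 1 := by omega
    have := harm_succ (n - 1 - k)
    rw [← e] at this
    have hc : ((n - 1 - k : ℕ) : ℝ) + 1 = (n : ℝ) - k := by
      rw [show n - 1 - k = n - (1 + k) by omega, Nat.cast_sub (show 1 + k ≤ n by omega)]
      push_cast; ring
    rw [hc] at this; linarith
  have c1 := cast_choose_succ_left n k hkn.le
  have c2 := cast_choose_pred_left n k hn hkn.le
  have d1 : (n : ℝ) - k ≠ 0 := by
    have : (k : ℝ) < n := by exact_mod_cast hkn
    intro h0; linarith
  have d3 : (n : ℝ) + 1 - k ≠ 0 := by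
    have : (k : ℝ) < n := by exact_mod_cast hkn
    intro h0; linarith
  have d5 : (n : ℝ) ≠ 0 := by
    have : (0:ℝ) < n := by exact_mod_cast hn
    linarith
  set W := harm (n - k) - 2 * harm k with hW
  set c : ℝ := (n.choose k : ℝ) with hc
  have eB1 : A (n + 1) k k
      = c * ((n : ℝ) + 1) / ((n : ℝ) + 1 - k) * (W + 1 / ((n : ℝ) + 1 - k)) := by
    rw [A, hKK, h1, c1, Nat.choose_self, hW]; push_cast; ring
  have eB0 : A n k k = c * W := by
    rw [A, hKK, Nat.choose_self, hW]; push_cast; ring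
  have eB2 : A (n - 1) k k
      = c * ((n : ℝ) - k) / (n : ℝ) * (W - 1 / ((n : ℝ) - k)) := by
    rw [A, hKK, h2, c2, Nat.choose_self, hW]; push_cast; ring
  have eg0 : g n k k
      = -c * ((k : ℝ) ^ 2 * W / ((n : ℝ) + 1 - k)
          + (k : ℝ) * (2 * (n : ℝ) + 2 - k) / ((n : ℝ) + 1 - k) ^ 2) := by
    rw [g, hKK, Nat.choose_self, hW]; push_cast; ring
  rw [eB1, eB0, eB2, eg0]
  exact core2 (n : ℝ) (k : ℝ) c W d5 d1 d3

lemma step_diag (n : ℕ) (hn : 1 ≤ n) :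
    ((n : ℝ) + 1) * A (n + 1) n n - (2 * (n : ℝ) + 1) * A n n n + (n : ℝ) * A (n - 1) n n
      - (n : ℝ) * A n (n - 1) n
    = g n n (n + 1) - g n n n + 1 := by
  have hz1 : (n : ℝ) * A n (n - 1) n = 0 := by
    have : (n - 1).choose n = 0 := Nat.choose_eq_zero_of_lt (by omega)
    simp [A, this]
  have hz2 : g n n (n + 1) = 0 := by
    have : n.choose (n + 1) = 0 := Nat.choose_succ_self n
    simp [g, this]
  have hz3 : A (n - 1) n n = 0 := by
    have : (n - 1).choose n = 0 := Nat.choose_eq_zero_of_lt (by omega)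
    simp [A, this]
  rw [hz1, hz2, hz3]
  have e1 : A (n + 1) n n = ((n : ℝ) + 1) * (1 - 2 * harm n) := by
    rw [A, Nat.sub_self, show n + 1 - n = 1 by omega, harm_zero, harm_one,
      Nat.choose_self, Nat.choose_succ_self_right]
    push_cast; ring
  have e0 : A n n n = -2 * harm n := by
    rw [A, Nat.sub_self, harm_zero, Nat.choose_self]
    push_cast; ring
  have eg : g n n n = 2 * (n : ℝ) ^ 2 * harm n - (n : ℝ) ^ 2 - 2 * n := by
    rw [g, Nat.sub_self, harm_zero, Nat.choose_self]
    push_cast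
    have : (n : ℝ) + 1 - n = 1 := by ring
    rw [this]
    ring
  rw [e1, e0, eg]
  --
  ring


lemma step (n k s : ℕ) (hn : 1 ≤ n) (hk : k ≤ n) (hs : s ≤ k) :
    ((n : ℝ) + 1) * A (n + 1) k s - (2 * (n : ℝ) + 1) * A n k s + (n : ℝ) * A (n - 1) k s
      - (k : ℝ) * A n (k - 1) s
    = g n k (s + 1) - g n k s + (if k = n ∧ s = n then 1 else 0) := by
  rcases lt_or_eq_of_le hs with hsk | heq
  · rw [if_neg (by omega), add_zero]
    exact step_generic n k s hn hk hsk
  · subst heq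
    rcases lt_or_eq_of_le hk with hkn | heq2
    · rw [if_neg (by omega), add_zero]
      exact step_edge n s hn hkn
    · subst heq2
      rw [if_pos ⟨rfl, rfl⟩]
      exact step_diag s hn

lemma A_symm (a b s : ℕ) : A a b s = A b a s := by
  unfold A; ring

lemma T_symm_aux (a b : ℕ) (h : b ≤ a) : T a b = T b a := by
  unfold T
  rw [Finset.sum_congr rfl (fun s _ => A_symm a b s)]
  apply Finset.sum_subset
  · exact Finset.range_subset_range.2 (by omega)
  · intro s hs hns
    have : b < s := by simp [Finset.mem_range] at hs hns ⊢; omega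
    have hz : b.choose s = 0 := Nat.choose_eq_zero_of_lt this
    simp [A, hz]

lemma T_symm (a b : ℕ) : T a b = T b a := by
  rcases le_total b a with h | h
  · exact T_symm_aux a b h
  · exact (T_symm_aux b a h).symm

lemma T_diag (n : ℕ) : T n n = 0 := by
  have h : T n n = -T n n := by
    nth_rewrite 1 [T, ← Finset.sum_range_reflect]
    rw [T, ← Finset.sum_neg_distrib]
    apply Finset.sum_congr rfl
    intro j hj
    have hj' : j ≤ n := by simp [Finset.mem_range] at hj; omega
    have e1 : n + 1 - 1 - j = n - j := by omega
    have e2 : n - (n - j) = j := by omega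
    unfold A
    rw [e1, Nat.choose_symm hj', e2]
    ring
  linarith

lemma master (n k : ℕ) (hn : 1 ≤ n) (hk : k ≤ n) :
    ((n : ℝ) + 1) * T (n + 1) k - (2 * (n : ℝ) + 1) * T n k + (n : ℝ) * T (n - 1) k
      - (k : ℝ) * T n (k - 1)
    = if k = n then 1 else 0 := by
  have hT4 : (k : ℝ) * T n (k - 1) = ∑ s ∈ range (k + 1), (k : ℝ) * A n (k - 1) s := by
    rcases Nat.eq_zero_or_pos k with rfl | hk0
    · simp
    · rw [T, show k - 1 + 1 = k by omega, Finset.mul_sum, Finset.sum_range_succ]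
      have hz : A n (k - 1) k = 0 := by
        have : (k - 1).choose k = 0 := Nat.choose_eq_zero_of_lt (by omega)
        simp [A, this]
      rw [hz, mul_zero, add_zero]
  have expand : ((n : ℝ) + 1) * T (n + 1) k - (2 * (n : ℝ) + 1) * T n k
        + (n : ℝ) * T (n - 1) k - (k : ℝ) * T n (k - 1)
      = ∑ s ∈ range (k + 1),
          (((n : ℝ) + 1) * A (n + 1) k s - (2 * (n : ℝ) + 1) * A n k s
            + (n : ℝ) * A (n - 1) k s - (k : ℝ) * A n (k - 1) s) := by
    rw [hT4]
    unfold T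
    rw [Finset.mul_sum, Finset.mul_sum, Finset.mul_sum]
    rw [← Finset.sum_sub_distrib, ← Finset.sum_add_distrib, ← Finset.sum_sub_distrib]
  rw [expand]
  rw [Finset.sum_congr rfl (fun s hs => step n k s hn hk (by
    simp [Finset.mem_range] at hs; omega))]
  rw [Finset.sum_add_distrib, Finset.sum_range_sub (g n k)]
  have hg0 : g n k 0 = 0 := by simp [g]
  have hgk : g n k (k + 1) = 0 := by
    have : k.choose (k + 1) = 0 := Nat.choose_succ_self k
    simp [g, this]
  rw [hg0, hgk]
  have hite : (∑ s ∈ range (k + 1), if k = n ∧ s = n then (1 : ℝ) else 0)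
      = if k = n then 1 else 0 := by
    rcases eq_or_ne k n with rfl | hne
    · rw [if_pos rfl]
      have he : ∀ s : ℕ, (if k = k ∧ s = k then (1:ℝ) else 0) = if s = k then 1 else 0 := by
        intro s; simp
      rw [Finset.sum_congr rfl (fun s _ => he s),
        Finset.sum_ite_eq' (range (k + 1)) k (fun _ => (1:ℝ))]
      simp
    · rw [if_neg hne]
      apply Finset.sum_eq_zero
      intro s _
      rw [if_neg (by tauto)]
  rw [hite]
  ring

lemma T_succ (m : ℕ) : T (m + 1) m = 1 / ((m : ℝ) + 1) := by
  rcases Nat.eq_zero_or_pos m with rfl | hm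
  · unfold T
    simp [A, harm_one, harm_zero]
  · have h := master m m hm le_rfl
    rw [if_pos rfl, T_diag, T_symm (m - 1) m] at h
    have hne : (m : ℝ) + 1 ≠ 0 := by positivity
    rw [eq_div_iff hne]
    have : (m : ℝ) * T m (m - 1) - (m : ℝ) * T m (m - 1) = 0 := by ring
    nlinarith [h]

end PsiAux



namespace PsiAux

lemma Psi_eq (κ : ℂ) (n : ℕ) :
    Psi κ n = ∑ k ∈ range (n + 1), (-κ) ^ k / (k.factorial : ℂ) * ((T n k : ℝ) : ℂ) := by
  unfold Psi T A
  apply Finset.sum_congr rfl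
  intro k _
  congr 1
  push_cast
  rfl

lemma main_rec (κ : ℂ) (n : ℕ) (hn : 1 ≤ n) :
    -((n : ℂ) + 1) * (Psi κ (n + 1) - Psi κ n) + n * (Psi κ n - Psi κ (n - 1))
      = κ * Psi κ n := by
  have hfac : ∀ i : ℕ, ((i : ℂ) + 1) * ((-κ) ^ (i + 1) / ((i + 1).factorial : ℂ))
      = -κ * ((-κ) ^ i / (i.factorial : ℂ)) := by
    intro i
    have h1 : (((i + 1).factorial : ℕ) : ℂ) = ((i : ℂ) + 1) * ((i.factorial : ℕ) : ℂ) := by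
      rw [Nat.factorial_succ]; push_cast; ring
    have h2 : ((i.factorial : ℕ) : ℂ) ≠ 0 := by
      exact_mod_cast Nat.cast_ne_zero.2 (Nat.factorial_ne_zero i)
    have h3 : ((i : ℂ) + 1) ≠ 0 := by
      have : ((i + 1 : ℕ) : ℂ) ≠ 0 := Nat.cast_ne_zero.2 (Nat.succ_ne_zero i)
      push_cast at this; exact this
    rw [pow_succ, h1]
    field_simp
  have hΨ1 : Psi κ (n + 1)
      = ∑ k ∈ range (n + 2), (-κ) ^ k / (k.factorial : ℂ) * ((T (n + 1) k : ℝ) : ℂ) := by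
    have := Psi_eq κ (n + 1)
    rwa [show n + 1 + 1 = n + 2 by omega] at this
  have hS : Psi κ n = (∑ k ∈ range (n + 2), (-κ) ^ k / (k.factorial : ℂ) * ((T n k : ℝ) : ℂ))
      - (-κ) ^ (n + 1) / ((n + 1).factorial : ℂ) * ((T n (n + 1) : ℝ) : ℂ) := by
    rw [Psi_eq κ n, show n + 2 = (n + 1) + 1 by omega,
      Finset.sum_range_succ (fun k => (-κ) ^ k / (k.factorial : ℂ) * ((T n k : ℝ) : ℂ)) (n + 1)]
    ring
  have hS0 : Psi κ (n - 1)
      = (∑ k ∈ range (n + 2), (-κ) ^ k / (k.factorial : ℂ) * ((T (n - 1) k : ℝ) : ℂ))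
        - (-κ) ^ (n + 1) / ((n + 1).factorial : ℂ) * ((T (n - 1) (n + 1) : ℝ) : ℂ)
        - (-κ) ^ n / (n.factorial : ℂ) * ((T (n - 1) n : ℝ) : ℂ) := by
    have h0 := Psi_eq κ (n - 1)
    rw [show n - 1 + 1 = n by omega] at h0
    rw [h0, show n + 2 = (n + 1) + 1 by omega,
      Finset.sum_range_succ (fun k => (-κ) ^ k / (k.factorial : ℂ) * ((T (n - 1) k : ℝ) : ℂ)) (n + 1),
      Finset.sum_range_succ (fun k => (-κ) ^ k / (k.factorial : ℂ) * ((T (n - 1) k : ℝ) : ℂ)) n]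
    ring
  have hκΨ : κ * Psi κ n
      = -∑ k ∈ range (n + 2),
          (k : ℂ) * ((-κ) ^ k / (k.factorial : ℂ)) * ((T n (k - 1) : ℝ) : ℂ) := by
    rw [Psi_eq κ n, Finset.mul_sum, show n + 2 = (n + 1) + 1 by omega,
      Finset.sum_range_succ'
        (fun k => (k : ℂ) * ((-κ) ^ k / (k.factorial : ℂ)) * ((T n (k - 1) : ℝ) : ℂ)) (n + 1)]
    simp only [Nat.cast_zero, zero_mul, add_zero, Nat.add_sub_cancel]
    rw [← Finset.sum_neg_distrib]
    apply Finset.sum_congr rfl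
    intro i _
    have h := hfac i
    push_cast
    push_cast at h
    linear_combination ((T n i : ℝ) : ℂ) * h
  have key : ∀ k : ℕ, k ≤ n →
      ((n : ℂ) + 1) * ((T (n + 1) k : ℝ) : ℂ) - (2 * (n : ℂ) + 1) * ((T n k : ℝ) : ℂ)
        + (n : ℂ) * ((T (n - 1) k : ℝ) : ℂ) - (k : ℂ) * ((T n (k - 1) : ℝ) : ℂ)
      = if k = n then 1 else 0 := by
    intro k hk
    have h := master n k hn hk
    rcases eq_or_ne k n with rfl | hne
    · rw [if_pos rfl] at h ⊢; exact_mod_cast h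
    · rw [if_neg hne] at h ⊢; exact_mod_cast h
  have split : (∑ k ∈ range (n + 2), (-κ) ^ k / (k.factorial : ℂ) *
        (((n : ℂ) + 1) * ((T (n + 1) k : ℝ) : ℂ) - (2 * (n : ℂ) + 1) * ((T n k : ℝ) : ℂ)
          + (n : ℂ) * ((T (n - 1) k : ℝ) : ℂ) - (k : ℂ) * ((T n (k - 1) : ℝ) : ℂ)))
      = ((n : ℂ) + 1) * (∑ k ∈ range (n + 2), (-κ) ^ k / (k.factorial : ℂ) * ((T (n + 1) k : ℝ) : ℂ))
        - (2 * (n : ℂ) + 1) * (∑ k ∈ range (n + 2), (-κ) ^ k / (k.factorial : ℂ) * ((T n k : ℝ) : ℂ))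
        + (n : ℂ) * (∑ k ∈ range (n + 2), (-κ) ^ k / (k.factorial : ℂ) * ((T (n - 1) k : ℝ) : ℂ))
        - (∑ k ∈ range (n + 2),
            (k : ℂ) * ((-κ) ^ k / (k.factorial : ℂ)) * ((T n (k - 1) : ℝ) : ℂ)) := by
    rw [Finset.mul_sum, Finset.mul_sum, Finset.mul_sum,
      ← Finset.sum_sub_distrib, ← Finset.sum_add_distrib, ← Finset.sum_sub_distrib]
    apply Finset.sum_congr rfl
    intro k _
    ring
  have comb : (∑ k ∈ range (n + 2), (-κ) ^ k / (k.factorial : ℂ) *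
        (((n : ℂ) + 1) * ((T (n + 1) k : ℝ) : ℂ) - (2 * (n : ℂ) + 1) * ((T n k : ℝ) : ℂ)
          + (n : ℂ) * ((T (n - 1) k : ℝ) : ℂ) - (k : ℂ) * ((T n (k - 1) : ℝ) : ℂ)))
      = (-κ) ^ n / (n.factorial : ℂ) + (-κ) ^ (n + 1) / ((n + 1).factorial : ℂ) *
          (((n : ℂ) + 1) * ((T (n + 1) (n + 1) : ℝ) : ℂ)
            - (2 * (n : ℂ) + 1) * ((T n (n + 1) : ℝ) : ℂ)
            + (n : ℂ) * ((T (n - 1) (n + 1) : ℝ) : ℂ)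
            - ((n : ℂ) + 1) * ((T n n : ℝ) : ℂ)) := by
    rw [show n + 2 = (n + 1) + 1 by omega, Finset.sum_range_succ]
    congr 1
    · have he : ∀ k ∈ range (n + 1), (-κ) ^ k / (k.factorial : ℂ) *
          (((n : ℂ) + 1) * ((T (n + 1) k : ℝ) : ℂ) - (2 * (n : ℂ) + 1) * ((T n k : ℝ) : ℂ)
            + (n : ℂ) * ((T (n - 1) k : ℝ) : ℂ) - (k : ℂ) * ((T n (k - 1) : ℝ) : ℂ))
          = if k = n then (-κ) ^ k / (k.factorial : ℂ) else 0 := by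
        intro k hk
        rw [key k (by simp [Finset.mem_range] at hk; omega)]
        rcases eq_or_ne k n with rfl | hne
        · rw [if_pos rfl, if_pos rfl, mul_one]
        · rw [if_neg hne, if_neg hne, mul_zero]
      rw [Finset.sum_congr rfl he,
        Finset.sum_ite_eq' (range (n + 1)) n (fun k => (-κ) ^ k / (k.factorial : ℂ))]
      simp
    · rw [Nat.add_sub_cancel]
      push_cast
      ring
  have zd1 : ((T (n + 1) (n + 1) : ℝ) : ℂ) = 0 := by rw [T_diag]; norm_num
  have zd2 : ((T n n : ℝ) : ℂ) = 0 := by rw [T_diag]; norm_num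
  have hTn : (n : ℂ) * ((T (n - 1) n : ℝ) : ℂ) = 1 := by
    have h1 := T_succ (n - 1)
    rw [show n - 1 + 1 = n by omega] at h1
    have hc : ((n - 1 : ℕ) : ℝ) + 1 = (n : ℝ) := by
      rw [Nat.cast_sub hn]; push_cast; ring
    rw [hc] at h1
    have h2 : T (n - 1) n = 1 / (n : ℝ) := by rw [T_symm]; exact h1
    rw [h2]
    have hne : (n : ℂ) ≠ 0 := Nat.cast_ne_zero.2 (by omega)
    push_cast
    field_simp
  rw [hκΨ, hΨ1, hS, hS0]
  linear_combination split - comb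
    - ((n : ℂ) + 1) * ((-κ) ^ (n + 1) / ((n + 1).factorial : ℂ)) * zd1
    + ((n : ℂ) + 1) * ((-κ) ^ (n + 1) / ((n + 1).factorial : ℂ)) * zd2
    + ((-κ) ^ n / (n.factorial : ℂ)) * hTn

end PsiAux

/-- `Ψ_κ` solves `-(n+1)(Ψ(n+1) - Ψ(n)) + n(Ψ(n) - Ψ(n-1)) = κ Ψ(n)` for `n ≥ 1`,
with `Ψ_κ(0) = 0` and `Ψ_κ(1) = 1`. -/
theorem Psi_recurrence (κ : ℂ) :
    (∀ n : ℕ, 1 ≤ n →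
      -((n : ℂ) + 1) * (Psi κ (n + 1) - Psi κ n) + n * (Psi κ n - Psi κ (n - 1))
        = κ * Psi κ n) ∧
    Psi κ 0 = 0 ∧ Psi κ 1 = 1 := by
  refine ⟨fun n hn => PsiAux.main_rec κ n hn, ?_, ?_⟩
  · simp [Psi, PsiAux.harm_zero]
  · rw [Psi]
    rw [Finset.sum_range_succ, Finset.sum_range_succ, Finset.sum_range_succ,
      Finset.sum_range_succ, Finset.sum_range_succ]
    simp [PsiAux.harm_zero, PsiAux.harm_one]
    norm_num
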